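/- Let β₁, β₂ ∈ [0,d), γ₂ ≥ 0 with 3β₁ + β₂ + γ₂ > 4d, and write ζ = (ξ,η) ∈ R^{2d}, |ζ|_a = |ξ|^{1/3} + |η|. Then sup_{ζ' ∈ R^{2d}} ∫_{R^{2d}} |ξ|^{−β₁} |η|^{−β₂} (1 + |ζ + ζ'|_a)^{−γ₂} dζ < ∞. -/
import Mathlib

open MeasureTheory Set Metric
open scoped ENNReal

open MeasureTheory

lemma aux_ball_lintegral (d : ℕ) {β : ℝ} (hβ0 : 0 ≤ β) (hβd : β < d) :
    ∫⁻ x : EuclideanSpace ℝ (Fin d) in Metric.ball 0 1,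
      ENNReal.ofReal (‖x‖ ^ (-β)) < ∞ := by
  rcases eq_or_lt_of_le hβ0 with h0 | h0
  · simp only [← h0, neg_zero, Real.rpow_zero, ENNReal.ofReal_one]
    simpa using measure_ball_lt_top (x := (0 : EuclideanSpace ℝ (Fin d))) (r := 1)
  set E := EuclideanSpace ℝ (Fin d)
  set μ : Measure E := volume.restrict (Metric.ball 0 1) with hμ
  have hmeas : Measurable fun x : E => ‖x‖ ^ (-β) := by fun_prop
  rw [lintegral_eq_lintegral_meas_le μ
    (Filter.Eventually.of_forall fun x => Real.rpow_nonneg (norm_nonneg x) _)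
    hmeas.aemeasurable]
  have hball : volume (Metric.ball (0:E) 1) < ∞ := measure_ball_lt_top
  calc ∫⁻ t in Ioi 0, μ {a : E | t ≤ ‖a‖ ^ (-β)}
      ≤ ∫⁻ t in Ioc 0 1 ∪ Ioi 1, μ {a : E | t ≤ ‖a‖ ^ (-β)} :=
        lintegral_mono_set Ioi_subset_Ioc_union_Ioi
    _ ≤ (∫⁻ t in Ioc 0 1, μ {a : E | t ≤ ‖a‖ ^ (-β)})
        + ∫⁻ t in Ioi 1, μ {a : E | t ≤ ‖a‖ ^ (-β)} := lintegral_union_le _ _ _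
    _ < ∞ := by
        refine ENNReal.add_lt_top.2 ⟨?_, ?_⟩
        · calc (∫⁻ t in Ioc 0 1, μ {a : E | t ≤ ‖a‖ ^ (-β)})
              ≤ ∫⁻ _ in Ioc (0:ℝ) 1, volume (Metric.ball (0:E) 1) := by
                refine setLIntegral_mono' measurableSet_Ioc fun t _ => ?_
                calc μ {a : E | t ≤ ‖a‖ ^ (-β)} ≤ μ univ := measure_mono (subset_univ _)
                  _ = volume (Metric.ball (0:E) 1) := by
                      rw [hμ, Measure.restrict_apply_univ]
            _ < ∞ := by
                rw [setLIntegral_const]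
                exact ENNReal.mul_lt_top hball (by simp [Real.volume_Ioc] : volume (Ioc (0:ℝ) 1) < ∞)
        · have key : ∀ t ∈ Ioi (1:ℝ), μ {a : E | t ≤ ‖a‖ ^ (-β)}
              ≤ ENNReal.ofReal (t ^ (-β⁻¹ * d)) * volume (Metric.ball (0:E) 1) := by
            intro t ht
            have ht0 : (0:ℝ) < t := lt_trans one_pos ht
            have hsub : {a : E | t ≤ ‖a‖ ^ (-β)} ⊆ Metric.closedBall 0 (t ^ (-β⁻¹)) := by
              intro a ha
              simp only [mem_setOf_eq] at ha
              have hna : 0 < ‖a‖ := by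
                rcases eq_or_lt_of_le (norm_nonneg a) with h | h
                · exfalso
                  rw [← h, Real.zero_rpow (by simpa using h0.ne')] at ha
                  exact absurd (ht0.trans_le ha) (lt_irrefl _)
                · exact h
              have := Real.rpow_le_rpow_of_nonpos ht0 ha
                (neg_nonpos.2 (inv_nonneg.2 h0.le))
              rw [← Real.rpow_mul (norm_nonneg a), neg_mul_neg,
                mul_inv_cancel₀ h0.ne', Real.rpow_one] at this
              simpa [Metric.mem_closedBall, dist_zero_right] using this
            have hr0 : (0:ℝ) ≤ t ^ (-β⁻¹) := Real.rpow_nonneg ht0.le _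
            calc μ {a : E | t ≤ ‖a‖ ^ (-β)}
                ≤ volume (Metric.closedBall (0:E) (t ^ (-β⁻¹))) := by
                  refine le_trans ?_ (measure_mono hsub)
                  exact Measure.restrict_le_self _
              _ = ENNReal.ofReal ((t ^ (-β⁻¹)) ^ Module.finrank ℝ E) *
                    volume (Metric.ball (0:E) 1) :=
                  Measure.addHaar_closedBall _ _ hr0
              _ = ENNReal.ofReal (t ^ (-β⁻¹ * d)) * volume (Metric.ball (0:E) 1) := by
                  rw [finrank_euclideanSpace_fin, ← Real.rpow_natCast (t ^ (-β⁻¹)) d,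
                    ← Real.rpow_mul ht0.le]
          calc (∫⁻ t in Ioi 1, μ {a : E | t ≤ ‖a‖ ^ (-β)})
              ≤ ∫⁻ t in Ioi 1, ENNReal.ofReal (t ^ (-β⁻¹ * d)) * volume (Metric.ball (0:E) 1) :=
                setLIntegral_mono' measurableSet_Ioi key
            _ = (∫⁻ t in Ioi 1, ENNReal.ofReal (t ^ (-β⁻¹ * d))) * volume (Metric.ball (0:E) 1) :=
                lintegral_mul_const' _ _ hball.ne
            _ < ∞ := by
                refine ENNReal.mul_lt_top ?_ hball
                refine IntegrableOn.setLIntegral_lt_top ?_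
                refine integrableOn_Ioi_rpow_of_lt ?_ one_pos
                have : (1:ℝ) < β⁻¹ * d := by
                  rw [inv_mul_eq_div, lt_div_iff₀ h0]
                  linarith
                linarith

lemma aux_core (d : ℕ) {β γ : ℝ} (hβ0 : 0 ≤ β) (hβd : β < d) (hγ0 : 0 ≤ γ)
    (hsum : (d:ℝ) < β + γ) :
    ∫⁻ x : EuclideanSpace ℝ (Fin d),
      ENNReal.ofReal (‖x‖ ^ (-β) * (1 + ‖x‖) ^ (-γ)) < ∞ := by
  set E := EuclideanSpace ℝ (Fin d) with hE
  set f : E → ℝ≥0∞ := fun x => ENNReal.ofReal (‖x‖ ^ (-β) * (1 + ‖x‖) ^ (-γ)) with hf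
  rw [← lintegral_add_compl f (measurableSet_ball : MeasurableSet (Metric.ball (0:E) 1))]
  refine ENNReal.add_lt_top.2 ⟨?_, ?_⟩
  · refine lt_of_le_of_lt ?_ (aux_ball_lintegral d hβ0 hβd)
    refine setLIntegral_mono' measurableSet_ball fun x _ => ?_
    refine ENNReal.ofReal_le_ofReal ?_
    refine mul_le_of_le_one_right (Real.rpow_nonneg (norm_nonneg x) _) ?_
    exact Real.rpow_le_one_of_one_le_of_nonpos (by linarith [norm_nonneg x])
      (neg_nonpos.2 hγ0)
  · have hbound : ∀ x : E, x ∈ (Metric.ball (0:E) 1)ᶜ →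
        f x ≤ ENNReal.ofReal ((2:ℝ) ^ β) * ENNReal.ofReal ((1 + ‖x‖) ^ (-(β + γ))) := by
      intro x hx
      have hx1 : (1:ℝ) ≤ ‖x‖ := by
        simpa [Metric.mem_ball, dist_zero_right, not_lt] using hx
      have h2 : (0:ℝ) < 1 + ‖x‖ := by linarith
      have key : ‖x‖ ^ (-β) ≤ (2:ℝ) ^ β * (1 + ‖x‖) ^ (-β) := by
        have h1 : ((2:ℝ) * ‖x‖) ^ (-β) ≤ (1 + ‖x‖) ^ (-β) :=
          Real.rpow_le_rpow_of_nonpos h2 (by linarith) (neg_nonpos.2 hβ0)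
        have h2x : ((2:ℝ) * ‖x‖) ^ (-β) = 2 ^ (-β) * ‖x‖ ^ (-β) :=
          Real.mul_rpow (by norm_num) (norm_nonneg x)
        have h3 : (2:ℝ) ^ β * 2 ^ (-β) = 1 := by
          rw [← Real.rpow_add (by norm_num : (0:ℝ) < 2)]; simp
        calc ‖x‖ ^ (-β) = (2:ℝ) ^ β * (2 ^ (-β) * ‖x‖ ^ (-β)) := by
              rw [← mul_assoc, h3, one_mul]
          _ ≤ (2:ℝ) ^ β * (1 + ‖x‖) ^ (-β) := by
              rw [← h2x]
              exact mul_le_mul_of_nonneg_left h1 (Real.rpow_nonneg (by norm_num) _)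
      rw [hf, ← ENNReal.ofReal_mul (Real.rpow_nonneg (by norm_num) _)]
      refine ENNReal.ofReal_le_ofReal ?_
      calc ‖x‖ ^ (-β) * (1 + ‖x‖) ^ (-γ)
          ≤ (2:ℝ) ^ β * (1 + ‖x‖) ^ (-β) * (1 + ‖x‖) ^ (-γ) :=
            mul_le_mul_of_nonneg_right key (Real.rpow_nonneg h2.le _)
        _ = (2:ℝ) ^ β * (1 + ‖x‖) ^ (-(β + γ)) := by
            rw [mul_assoc, ← Real.rpow_add h2, neg_add]
    calc ∫⁻ x : E in (Metric.ball (0:E) 1)ᶜ, f x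
        ≤ ∫⁻ x : E in (Metric.ball (0:E) 1)ᶜ,
            ENNReal.ofReal ((2:ℝ) ^ β) * ENNReal.ofReal ((1 + ‖x‖) ^ (-(β + γ))) :=
          setLIntegral_mono' measurableSet_ball.compl hbound
      _ ≤ ∫⁻ x : E,
            ENNReal.ofReal ((2:ℝ) ^ β) * ENNReal.ofReal ((1 + ‖x‖) ^ (-(β + γ))) :=
          setLIntegral_le_lintegral _ _
      _ = ENNReal.ofReal ((2:ℝ) ^ β) *
            ∫⁻ x : E, ENNReal.ofReal ((1 + ‖x‖) ^ (-(β + γ))) :=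
          lintegral_const_mul' _ _ ENNReal.ofReal_ne_top
      _ < ∞ := by
          refine ENNReal.mul_lt_top ENNReal.ofReal_lt_top ?_
          refine finite_integral_one_add_norm ?_
          rw [finrank_euclideanSpace_fin]; exact hsum

lemma aux_translate (d : ℕ) (hd : 0 < d) {β γ : ℝ} (hβ0 : 0 ≤ β) (hγ0 : 0 ≤ γ)
    (v : EuclideanSpace ℝ (Fin d)) :
    ∫⁻ x : EuclideanSpace ℝ (Fin d),
        ENNReal.ofReal (‖x‖ ^ (-β) * (1 + ‖x + v‖) ^ (-γ))
      ≤ 2 * ∫⁻ x : EuclideanSpace ℝ (Fin d),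
        ENNReal.ofReal (‖x‖ ^ (-β) * (1 + ‖x‖) ^ (-γ)) := by
  haveI : Nonempty (Fin d) := ⟨⟨0, hd⟩⟩
  haveI : Nontrivial (EuclideanSpace ℝ (Fin d)) := inferInstance
  set g : EuclideanSpace ℝ (Fin d) → ℝ := fun y => ‖y‖ ^ (-β) * (1 + ‖y‖) ^ (-γ) with hg
  have hgnn : ∀ y : EuclideanSpace ℝ (Fin d), 0 ≤ g y := fun y => by
    exact mul_nonneg (Real.rpow_nonneg (norm_nonneg _) _)
      (Real.rpow_nonneg (by positivity) _)
  have hae : ∀ᵐ x : EuclideanSpace ℝ (Fin d), x ≠ -v := by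
    have h0 : volume ({-v} : Set (EuclideanSpace ℝ (Fin d))) = 0 := measure_singleton _
    rw [ae_iff]
    convert h0 using 2
    ext x; simp
  have step1 : ∫⁻ x : EuclideanSpace ℝ (Fin d), ENNReal.ofReal (‖x‖ ^ (-β) * (1 + ‖x + v‖) ^ (-γ))
      ≤ ∫⁻ x : EuclideanSpace ℝ (Fin d), (ENNReal.ofReal (g x) + ENNReal.ofReal (g (x + v))) := by
    refine lintegral_mono_ae (hae.mono fun x hx => ?_)
    have hxv : ‖x + v‖ ≠ 0 := by
      simp only [norm_ne_zero_iff]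
      intro h
      exact hx (eq_neg_of_add_eq_zero_left h)
    have hxvpos : 0 < ‖x + v‖ := lt_of_le_of_ne (norm_nonneg _) (Ne.symm hxv)
    rw [← ENNReal.ofReal_add (hgnn x) (hgnn (x + v))]
    refine ENNReal.ofReal_le_ofReal ?_
    rcases le_total ‖x‖ ‖x + v‖ with hle | hle
    · have h1 : (1 + ‖x + v‖) ^ (-γ) ≤ (1 + ‖x‖) ^ (-γ) :=
        Real.rpow_le_rpow_of_nonpos (by positivity) (by linarith) (neg_nonpos.2 hγ0)
      calc ‖x‖ ^ (-β) * (1 + ‖x + v‖) ^ (-γ) ≤ g x :=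
            mul_le_mul_of_nonneg_left h1 (Real.rpow_nonneg (norm_nonneg _) _)
        _ ≤ g x + g (x + v) := le_add_of_nonneg_right (hgnn _)
    · have h1 : ‖x‖ ^ (-β) ≤ ‖x + v‖ ^ (-β) :=
        Real.rpow_le_rpow_of_nonpos hxvpos hle (neg_nonpos.2 hβ0)
      calc ‖x‖ ^ (-β) * (1 + ‖x + v‖) ^ (-γ) ≤ g (x + v) :=
            mul_le_mul_of_nonneg_right h1 (Real.rpow_nonneg (by positivity) _)
        _ ≤ g x + g (x + v) := le_add_of_nonneg_left (hgnn _)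
  have hmeas : Measurable fun x : EuclideanSpace ℝ (Fin d) => ENNReal.ofReal (g x) := by
    apply Measurable.ennreal_ofReal
    fun_prop
  have step2 : ∫⁻ x : EuclideanSpace ℝ (Fin d), (ENNReal.ofReal (g x) + ENNReal.ofReal (g (x + v)))
      = 2 * ∫⁻ x : EuclideanSpace ℝ (Fin d), ENNReal.ofReal (g x) := by
    rw [lintegral_add_left hmeas]
    rw [lintegral_add_right_eq_self (fun x => ENNReal.ofReal (g x)) v]
    ring
  exact step1.trans (le_of_eq step2)

lemma aux_split (a b γa γb : ℝ) (ha : 0 ≤ a) (hb : 0 ≤ b) (hγa : 0 ≤ γa) (hγb : 0 ≤ γb) :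
    (1 + (a + b)) ^ (-(γa + γb)) ≤ (1 + a) ^ (-γa) * (1 + b) ^ (-γb) := by
  have hA : (0:ℝ) < 1 + a := by linarith
  have hB : (0:ℝ) < 1 + b := by linarith
  have hAB : (0:ℝ) < 1 + (a + b) := by linarith
  rw [Real.rpow_neg hAB.le, Real.rpow_neg hA.le, Real.rpow_neg hB.le, ← mul_inv]
  refine inv_anti₀ (by positivity) ?_
  calc (1 + a) ^ γa * (1 + b) ^ γb
      ≤ (1 + (a + b)) ^ γa * (1 + (a + b)) ^ γb := by
        refine mul_le_mul (Real.rpow_le_rpow hA.le (by linarith) hγa)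
          (Real.rpow_le_rpow hB.le (by linarith) hγb) (by positivity) (by positivity)
    _ = (1 + (a + b)) ^ (γa + γb) := (Real.rpow_add hAB _ _).symm

lemma aux_cube (t γ : ℝ) (ht : 0 ≤ t) (hγ : 0 ≤ γ) :
    (1 + t ^ ((1:ℝ)/3)) ^ (-γ) ≤ (1 + t) ^ (-(γ/3)) := by
  set s : ℝ := t ^ ((1:ℝ)/3) with hs
  have hs0 : 0 ≤ s := Real.rpow_nonneg ht _
  have hcube : (1 + t) ≤ (1 + s) ^ (3:ℕ) := by
    have hs3 : s ^ (3:ℕ) = t := by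
      rw [hs, ← Real.rpow_natCast (t ^ ((1:ℝ)/3)) 3, ← Real.rpow_mul ht]
      norm_num
    nlinarith [sq_nonneg s, hs0]
  have hle : (1 + t) ^ ((1:ℝ)/3) ≤ 1 + s := by
    calc (1 + t) ^ ((1:ℝ)/3) ≤ ((1 + s) ^ (3:ℕ)) ^ ((1:ℝ)/3) :=
          Real.rpow_le_rpow (by linarith) hcube (by norm_num)
      _ = 1 + s := by
          rw [← Real.rpow_natCast (1 + s) 3, ← Real.rpow_mul (by linarith)]
          norm_num
  calc (1 + s) ^ (-γ) ≤ ((1 + t) ^ ((1:ℝ)/3)) ^ (-γ) :=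
        Real.rpow_le_rpow_of_nonpos (by positivity) hle (neg_nonpos.2 hγ)
    _ = (1 + t) ^ (-(γ/3)) := by
        rw [← Real.rpow_mul (by linarith)]
        ring_nf

set_option maxHeartbeats 2000000 in
/-- Anisotropic singular-kernel bound: for `β₁, β₂ ∈ [0,d)`, `γ₂ ≥ 0` with
`3β₁ + β₂ + γ₂ > 4d`, writing `|ζ|_a = |ξ|^{1/3} + |η|` for `ζ = (ξ,η)`,
`sup_{ζ'} ∫ |ξ|^{−β₁}|η|^{−β₂}(1+|ζ+ζ'|_a)^{−γ₂} dζ < ∞`. -/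
theorem anisotropic_singular_kernel_bound (d : ℕ) (hd : 0 < d) (β₁ β₂ γ₂ : ℝ)
    (hβ₁ : β₁ ∈ Set.Ico (0 : ℝ) (d : ℝ)) (hβ₂ : β₂ ∈ Set.Ico (0 : ℝ) (d : ℝ))
    (hγ₂ : 0 ≤ γ₂) (h : 4 * (d : ℝ) < 3 * β₁ + β₂ + γ₂) :
    ∃ C : ℝ, ∀ ξ' η' : EuclideanSpace ℝ (Fin d),
      (∫ ξ : EuclideanSpace ℝ (Fin d), ∫ η : EuclideanSpace ℝ (Fin d),
        ‖ξ‖ ^ (-β₁) * ‖η‖ ^ (-β₂) *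
          (1 + (‖ξ + ξ'‖ ^ ((1 : ℝ) / 3) + ‖η + η'‖)) ^ (-γ₂)) ≤ C := by
  obtain ⟨hβ₁0, hβ₁d⟩ := hβ₁
  obtain ⟨hβ₂0, hβ₂d⟩ := hβ₂
  set s : ℝ := (3 * β₁ + β₂ + γ₂ - 4 * d) / 2 with hs
  have hspos : 0 < s := by rw [hs]; linarith
  set γa : ℝ := 3 * ((d:ℝ) - β₁) + s with hγa
  set γb : ℝ := ((d:ℝ) - β₂) + s with hγb
  have hγa0 : 0 ≤ γa := by rw [hγa]; nlinarith
  have hγb0 : 0 ≤ γb := by rw [hγb]; nlinarith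
  have hγab : γa + γb = γ₂ := by rw [hγa, hγb, hs]; ring
  have hγa30 : 0 ≤ γa / 3 := by linarith
  have hcond₁ : (d:ℝ) < β₁ + γa / 3 := by rw [hγa]; nlinarith
  have hcond₂ : (d:ℝ) < β₂ + γb := by rw [hγb]; nlinarith
  set M₁ : ℝ≥0∞ := ∫⁻ x : EuclideanSpace ℝ (Fin d),
    ENNReal.ofReal (‖x‖ ^ (-β₁) * (1 + ‖x‖) ^ (-(γa / 3))) with hM₁def
  set M₂ : ℝ≥0∞ := ∫⁻ x : EuclideanSpace ℝ (Fin d),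
    ENNReal.ofReal (‖x‖ ^ (-β₂) * (1 + ‖x‖) ^ (-γb)) with hM₂def
  have hM₁ : M₁ < ∞ := aux_core d hβ₁0 hβ₁d hγa30 hcond₁
  have hM₂ : M₂ < ∞ := aux_core d hβ₂0 hβ₂d hγb0 hcond₂
  have hfin : (2 * M₁) * (2 * M₂) ≠ ∞ := by
    refine (ENNReal.mul_lt_top (ENNReal.mul_lt_top (by norm_num) hM₁)
      (ENNReal.mul_lt_top (by norm_num) hM₂)).ne
  refine ⟨((2 * M₁) * (2 * M₂)).toReal, fun ξ' η' => ?_⟩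
  set F : EuclideanSpace ℝ (Fin d) → EuclideanSpace ℝ (Fin d) → ℝ := fun ξ η =>
    ‖ξ‖ ^ (-β₁) * ‖η‖ ^ (-β₂) *
      (1 + (‖ξ + ξ'‖ ^ ((1 : ℝ) / 3) + ‖η + η'‖)) ^ (-γ₂) with hF
  have hFnn : ∀ ξ η, 0 ≤ F ξ η := fun ξ η => by
    rw [hF]; positivity
  set f₁ : EuclideanSpace ℝ (Fin d) → ℝ := fun ξ =>
    ‖ξ‖ ^ (-β₁) * (1 + ‖ξ + ξ'‖) ^ (-(γa / 3)) with hf₁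
  set f₂ : EuclideanSpace ℝ (Fin d) → ℝ := fun η =>
    ‖η‖ ^ (-β₂) * (1 + ‖η + η'‖) ^ (-γb) with hf₂
  have hf₁nn : ∀ ξ, 0 ≤ f₁ ξ := fun ξ => by rw [hf₁]; positivity
  have hf₂nn : ∀ η, 0 ≤ f₂ η := fun η => by rw [hf₂]; positivity
  -- pointwise bound F ≤ f₁ * f₂
  have hpt : ∀ ξ η, F ξ η ≤ f₁ ξ * f₂ η := by
    intro ξ η
    have ha : 0 ≤ ‖ξ + ξ'‖ ^ ((1:ℝ)/3) := Real.rpow_nonneg (norm_nonneg _) _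
    have hb : 0 ≤ ‖η + η'‖ := norm_nonneg _
    have h1 : (1 + (‖ξ + ξ'‖ ^ ((1:ℝ)/3) + ‖η + η'‖)) ^ (-γ₂)
        ≤ (1 + ‖ξ + ξ'‖ ^ ((1:ℝ)/3)) ^ (-γa) * (1 + ‖η + η'‖) ^ (-γb) := by
      rw [← hγab]
      exact aux_split _ _ _ _ ha hb hγa0 hγb0
    have h2 : (1 + ‖ξ + ξ'‖ ^ ((1:ℝ)/3)) ^ (-γa) ≤ (1 + ‖ξ + ξ'‖) ^ (-(γa / 3)) :=
      aux_cube _ _ (norm_nonneg _) hγa0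
    have h3 : (1 + (‖ξ + ξ'‖ ^ ((1:ℝ)/3) + ‖η + η'‖)) ^ (-γ₂)
        ≤ (1 + ‖ξ + ξ'‖) ^ (-(γa / 3)) * (1 + ‖η + η'‖) ^ (-γb) :=
      h1.trans (mul_le_mul_of_nonneg_right h2 (Real.rpow_nonneg (by positivity) _))
    calc F ξ η ≤ ‖ξ‖ ^ (-β₁) * ‖η‖ ^ (-β₂) *
          ((1 + ‖ξ + ξ'‖) ^ (-(γa / 3)) * (1 + ‖η + η'‖) ^ (-γb)) := by
          rw [hF]
          exact mul_le_mul_of_nonneg_left h3 (by positivity)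
      _ = f₁ ξ * f₂ η := by rw [hf₁, hf₂]; ring
  -- measurability
  have hFm : Measurable (fun p : EuclideanSpace ℝ (Fin d) × EuclideanSpace ℝ (Fin d) =>
      F p.1 p.2) := by
    simp only [hF]; fun_prop
  have hFm2 : ∀ ξ, Measurable fun η => F ξ η := fun ξ => by
    simp only [hF]; fun_prop
  set I : EuclideanSpace ℝ (Fin d) → ℝ≥0∞ := fun ξ =>
    ∫⁻ η, ENNReal.ofReal (F ξ η) with hI
  have hIm : Measurable I := by
    rw [hI]
    exact Measurable.lintegral_prod_right (hFm.ennreal_ofReal)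
  -- rewrite inner integrals
  have inner_eq : ∀ ξ, (∫ η, F ξ η) = (I ξ).toReal := fun ξ => by
    rw [hI]
    exact integral_eq_lintegral_of_nonneg_ae
      (Filter.Eventually.of_forall fun η => hFnn ξ η)
      (hFm2 ξ).aestronglyMeasurable
  have outer_eq : (∫ ξ, ∫ η, F ξ η)
      = (∫⁻ ξ, ENNReal.ofReal ((I ξ).toReal)).toReal := by
    rw [show (fun ξ => ∫ η, F ξ η) = fun ξ => (I ξ).toReal from funext inner_eq]
    exact integral_eq_lintegral_of_nonneg_ae
      (Filter.Eventually.of_forall fun ξ => ENNReal.toReal_nonneg)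
      hIm.ennreal_toReal.aestronglyMeasurable
  -- key bound
  have key : (∫⁻ ξ, ENNReal.ofReal ((I ξ).toReal)) ≤ (2 * M₁) * (2 * M₂) := by
    have hIb : ∀ ξ, I ξ ≤ ENNReal.ofReal (f₁ ξ) * (2 * M₂) := by
      intro ξ
      calc I ξ ≤ ∫⁻ η, ENNReal.ofReal (f₁ ξ) * ENNReal.ofReal (f₂ η) := by
            rw [hI]
            refine lintegral_mono fun η => ?_
            rw [← ENNReal.ofReal_mul (hf₁nn ξ)]
            exact ENNReal.ofReal_le_ofReal (hpt ξ η)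
        _ = ENNReal.ofReal (f₁ ξ) * ∫⁻ η, ENNReal.ofReal (f₂ η) :=
            lintegral_const_mul' _ _ ENNReal.ofReal_ne_top
        _ ≤ ENNReal.ofReal (f₁ ξ) * (2 * M₂) := by
            refine mul_le_mul_right ?_ _
            rw [hM₂def, hf₂]
            exact aux_translate d hd hβ₂0 hγb0 η'
    calc (∫⁻ ξ, ENNReal.ofReal ((I ξ).toReal))
        ≤ ∫⁻ ξ, I ξ := lintegral_mono fun ξ => ENNReal.ofReal_toReal_le
      _ ≤ ∫⁻ ξ, ENNReal.ofReal (f₁ ξ) * (2 * M₂) := lintegral_mono hIb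
      _ = (∫⁻ ξ, ENNReal.ofReal (f₁ ξ)) * (2 * M₂) :=
          lintegral_mul_const' _ _ (by
            exact (ENNReal.mul_lt_top (by norm_num) hM₂).ne)
      _ ≤ (2 * M₁) * (2 * M₂) := by
          refine mul_le_mul_left ?_ _
          rw [hM₁def, hf₁]
          exact aux_translate d hd hβ₁0 hγa30 ξ'
  calc (∫ ξ, ∫ η, F ξ η) = (∫⁻ ξ, ENNReal.ofReal ((I ξ).toReal)).toReal := outer_eq
    _ ≤ ((2 * M₁) * (2 * M₂)).toReal := ENNReal.toReal_mono hfin key
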